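/- A 2n×2n real symmetric matrix σ satisfies the Robertson–Schrödinger uncertainty relation σ + iΩ ≥ 0 (as a complex Hermitian positive semidefinite matrix) if and only if σ is positive definite and σ^{1/2} Ωᵀ σ Ω σ^{1/2} ≥ 𝟙_{2n}. -/

import Mathlib

open Matrix
open scoped ComplexOrder

open Classical in
/-- The eigenvalues of a matrix in increasing order (junk value `0` if not Hermitian). -/
noncomputable def eigUp {d : ℕ} (M : Matrix (Fin d) (Fin d) ℝ) : Fin d → ℝ :=
  if h : M.IsHermitian then h.eigenvalues ∘ Tuple.sort h.eigenvalues else 0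

/-- The eigenvalues of a matrix in decreasing order. -/
noncomputable def eigDown {d : ℕ} (M : Matrix (Fin d) (Fin d) ℝ) (j : Fin d) : ℝ :=
  eigUp M j.rev

/-- The standard symplectic form on `2n` canonical variables: block diagonal with
blocks `[[0,1],[-1,0]]`. -/
def Omega (n : ℕ) : Matrix (Fin (2*n)) (Fin (2*n)) ℝ :=
  Matrix.of fun i j =>
    if (i : ℕ) + 1 = (j : ℕ) ∧ (i : ℕ) % 2 = 0 then 1
    else if (j : ℕ) + 1 = (i : ℕ) ∧ (j : ℕ) % 2 = 0 then -1 else 0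

/-- Partial transposition matrix `T = 𝟙₂^{⊕ l} ⊕ σz^{⊕ (n-l)}` for the bipartition of the
first `l` versus the last `n - l` modes. -/
def Tmat (n l : ℕ) : Matrix (Fin (2*n)) (Fin (2*n)) ℝ :=
  Matrix.diagonal fun i => if (i : ℕ) / 2 < l ∨ (i : ℕ) % 2 = 0 then 1 else -1

/-- The partially transposed symplectic form `Ω̃ = T Ω T`. -/
def OmegaPT (n l : ℕ) : Matrix (Fin (2*n)) (Fin (2*n)) ℝ :=
  Tmat n l * Omega n * Tmat n l

open Classical in
/-- The positive square root of a positive semidefinite matrix (junk value `0` otherwise). -/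
noncomputable def msqrt {d : ℕ} (M : Matrix (Fin d) (Fin d) ℝ) : Matrix (Fin d) (Fin d) ℝ :=
  if h : M.PosSemidef then
    (h.1.eigenvectorUnitary : Matrix (Fin d) (Fin d) ℝ) *
      Matrix.diagonal ((↑) ∘ (Real.sqrt ·) ∘ h.1.eigenvalues) *
      (star h.1.eigenvectorUnitary : Matrix (Fin d) (Fin d) ℝ)
  else 0

/-- `σ + iΩ ≥ 0`: the Robertson–Schrödinger condition for a real symmetric matrix `σ`
to be a bona fide covariance matrix. -/
def IsCM (n : ℕ) (σ : Matrix (Fin (2*n)) (Fin (2*n)) ℝ) : Prop :=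
  σ.IsSymm ∧
    (σ.map (Complex.ofReal ·) + Complex.I • (Omega n).map (Complex.ofReal ·)).PosSemidef

/-- `ν̃₋²`, the square of the smallest partially transposed symplectic eigenvalue of `σ`, for
the bipartition of the first `l` versus the remaining modes: the smallest eigenvalue of
`σ^{1/2} Ω̃ᵀ σ Ω̃ σ^{1/2}`. -/
noncomputable def nuSq (n l : ℕ) (σ : Matrix (Fin (2*n)) (Fin (2*n)) ℝ) : ℝ :=
  sInf (spectrum ℝ (msqrt σ * (OmegaPT n l)ᵀ * σ * OmegaPT n l * msqrt σ))

/-- `ν̃₋`, the smallest partially transposed symplectic eigenvalue of `σ`. -/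
noncomputable def nuMin (n l : ℕ) (σ : Matrix (Fin (2*n)) (Fin (2*n)) ℝ) : ℝ :=
  Real.sqrt (nuSq n l σ)

/-- The logarithmic negativity `E_N(σ) = max (0, −log₂ ν̃₋)`. -/
noncomputable def logNeg (n l : ℕ) (σ : Matrix (Fin (2*n)) (Fin (2*n)) ℝ) : ℝ :=
  max 0 (-(Real.logb 2 (nuMin n l σ)))

section AuxLemmas
open Matrix
open scoped ComplexOrder

lemma Omega_transpose (n : ℕ) : (Omega n)ᵀ = -(Omega n) := by
  ext i j
  simp only [Omega, transpose_apply, of_apply, Matrix.neg_apply]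
  split_ifs <;> first | omega | norm_num

lemma Omega_mul_self (n : ℕ) : Omega n * Omega n = -1 := by
  ext i j
  have hi2 : (i : ℕ) < 2 * n := i.isLt
  rw [Matrix.mul_apply]
  rcases Nat.even_or_odd (i : ℕ) with hie | hio
  · have h0 : (i:ℕ) % 2 = 0 := Nat.even_iff.mp hie
    have hpn : (i:ℕ) + 1 < 2*n := by omega
    rw [Finset.sum_eq_single (⟨(i:ℕ)+1, hpn⟩ : Fin (2*n))]
    · simp only [Omega, of_apply, Matrix.neg_apply, Matrix.one_apply, Fin.ext_iff, true_and, and_true]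
      split_ifs <;> first | (exfalso; omega) | norm_num
    · intro k _ hk
      have hk' : (k : ℕ) ≠ (i:ℕ)+1 := fun h => hk (Fin.ext h)
      simp only [Omega, of_apply]
      split_ifs <;> first | (exfalso; omega) | norm_num
    · intro h; exact absurd (Finset.mem_univ _) h
  · have h1 : (i:ℕ) % 2 = 1 := Nat.odd_iff.mp hio
    have hpn : (i:ℕ) - 1 < 2*n := by omega
    rw [Finset.sum_eq_single (⟨(i:ℕ)-1, hpn⟩ : Fin (2*n))]
    · simp only [Omega, of_apply, Matrix.neg_apply, Matrix.one_apply, Fin.ext_iff, true_and, and_true]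
      split_ifs <;> first | (exfalso; omega) | norm_num
    · intro k _ hk
      have hk' : (k : ℕ) ≠ (i:ℕ)-1 := fun h => hk (Fin.ext h)
      simp only [Omega, of_apply]
      split_ifs <;> first | (exfalso; omega) | norm_num
    · intro h; exact absurd (Finset.mem_univ _) h

/-- complexification of a real matrix -/
noncomputable def cm {d : ℕ} (A : Matrix (Fin d) (Fin d) ℝ) : Matrix (Fin d) (Fin d) ℂ :=
  A.map (Complex.ofReal ·)

lemma cm_mul {d : ℕ} (A B : Matrix (Fin d) (Fin d) ℝ) : cm (A * B) = cm A * cm B := by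
  have h := Matrix.map_mul (L := A) (M := B) (f := Complex.ofRealHom)
  simpa [cm, Complex.ofRealHom] using h

lemma cm_one {d : ℕ} : cm (1 : Matrix (Fin d) (Fin d) ℝ) = 1 := by
  simp [cm, Matrix.map_one]

lemma cm_add {d : ℕ} (A B : Matrix (Fin d) (Fin d) ℝ) : cm (A + B) = cm A + cm B := by
  ext i j; simp [cm]

lemma cm_sub {d : ℕ} (A B : Matrix (Fin d) (Fin d) ℝ) : cm (A - B) = cm A - cm B := by
  ext i j; simp [cm]

lemma cm_neg {d : ℕ} (A : Matrix (Fin d) (Fin d) ℝ) : cm (-A) = -cm A := by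
  ext i j; simp [cm]

lemma cm_transpose {d : ℕ} (A : Matrix (Fin d) (Fin d) ℝ) : cm (Aᵀ) = (cm A)ᵀ := by
  ext i j; simp [cm]

lemma cm_conjTranspose {d : ℕ} (A : Matrix (Fin d) (Fin d) ℝ) : (cm A)ᴴ = cm (Aᵀ) := by
  ext i j; simp [cm, conjTranspose_apply, Complex.conj_ofReal]

lemma real_conjTranspose {d : ℕ} (A : Matrix (Fin d) (Fin d) ℝ) : Aᴴ = Aᵀ := by
  ext i j; simp [conjTranspose_apply]

lemma msqrt_mul_self {d : ℕ} {M : Matrix (Fin d) (Fin d) ℝ} (h : M.PosSemidef) :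
    msqrt M * msqrt M = M := by
  have hspec := h.1.spectral_theorem
  rw [Unitary.conjStarAlgAut_apply] at hspec
  have hU2 : star (h.1.eigenvectorUnitary : Matrix (Fin d) (Fin d) ℝ) *
      h.1.eigenvectorUnitary = 1 :=
    (Unitary.mem_iff.mp h.1.eigenvectorUnitary.prop).1
  unfold msqrt
  rw [dif_pos h]
  conv_rhs => rw [hspec]
  simp only [Matrix.mul_assoc]
  rw [← Matrix.mul_assoc (star _) (h.1.eigenvectorUnitary : Matrix (Fin d) (Fin d) ℝ), hU2,
    Matrix.one_mul, ← Matrix.mul_assoc (diagonal _) (diagonal _), diagonal_mul_diagonal]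
  congr 3
  funext i
  simp [Real.mul_self_sqrt (h.eigenvalues_nonneg i)]

lemma msqrt_transpose {d : ℕ} {M : Matrix (Fin d) (Fin d) ℝ} (h : M.PosSemidef) :
    (msqrt M)ᵀ = msqrt M := by
  unfold msqrt
  rw [dif_pos h]
  simp [Matrix.star_eq_conjTranspose, real_conjTranspose, Matrix.mul_assoc]

lemma cm_mulVec {d : ℕ} (A : Matrix (Fin d) (Fin d) ℝ) (x : Fin d → ℝ) :
    cm A *ᵥ (fun i => (x i : ℂ)) = fun j => ((A *ᵥ x) j : ℂ) := by
  funext j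
  simp [cm, mulVec, dotProduct]

lemma cm_quad {d : ℕ} (A : Matrix (Fin d) (Fin d) ℝ) (x : Fin d → ℝ) :
    (fun i => (x i : ℂ)) ⬝ᵥ (cm A *ᵥ (fun i => (x i : ℂ))) = ((x ⬝ᵥ A *ᵥ x : ℝ) : ℂ) := by
  rw [cm_mulVec]
  simp [dotProduct]

/-- transfer of positive semidefiniteness between ℝ and ℂ -/
lemma cm_posSemidef_iff {d : ℕ} (R : Matrix (Fin d) (Fin d) ℝ) :
    (cm R).PosSemidef ↔ R.PosSemidef := by
  constructor
  · intro h
    have hsym : R.IsHermitian := by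
      have h1 : (cm R)ᴴ = cm R := h.isHermitian
      rw [cm_conjTranspose] at h1
      have h2 : Rᵀ = R := by
        ext i j
        have := congrFun (congrFun h1 i) j
        simpa [cm] using this
      rw [IsHermitian, real_conjTranspose, h2]
    refine PosSemidef.of_dotProduct_mulVec_nonneg hsym (fun x => ?_)
    have h2 := h.dotProduct_mulVec_nonneg (fun i => (x i : ℂ))
    have hst : star (fun i => (x i : ℂ)) = fun i => (x i : ℂ) := by
      funext i; simp [Pi.star_apply, Complex.conj_ofReal]
    rw [hst, cm_quad] at h2
    have := Complex.zero_le_real.mp h2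
    simpa using this
  · intro h
    have hsq : msqrt R * msqrt R = R := msqrt_mul_self h
    have hsqh : (msqrt R)ᵀ = msqrt R := msqrt_transpose h
    have : cm R = (cm (msqrt R))ᴴ * cm (msqrt R) := by
      rw [cm_conjTranspose, hsqh, ← cm_mul, hsq]
    rw [this]
    exact posSemidef_conjTranspose_mul_self _

/-- conjugation by an invertible matrix preserves positive semidefiniteness, iff version -/
lemma psd_conj_iff {d : ℕ} (A A' M : Matrix (Fin d) (Fin d) ℂ)
    (h1 : A * A' = 1) (h2 : A' * A = 1) :
    (Aᴴ * M * A).PosSemidef ↔ M.PosSemidef := by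
  constructor
  · intro h
    have h3 := h.conjTranspose_mul_mul_same A'
    have e : A'ᴴ * (Aᴴ * M * A) * A' = M := by
      have e1 : A'ᴴ * Aᴴ = 1 := by rw [← conjTranspose_mul, h1, conjTranspose_one]
      calc A'ᴴ * (Aᴴ * M * A) * A' = (A'ᴴ * Aᴴ) * M * (A * A') := by
            simp only [Matrix.mul_assoc]
        _ = M := by rw [e1, h1, Matrix.one_mul, Matrix.mul_one]
    rwa [e] at h3
  · intro h
    exact h.conjTranspose_mul_mul_same A

/-- the key spectral lemma: for Hermitian B, `-1 ≤ B ≤ 1` iff `B² ≤ 1` -/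
lemma herm_one_pm_iff {d : ℕ} {B : Matrix (Fin d) (Fin d) ℂ} (hB : B.IsHermitian) :
    ((1 + B).PosSemidef ∧ (1 - B).PosSemidef) ↔ (1 - B * B).PosSemidef := by
  have hspec := hB.spectral_theorem
  rw [Unitary.conjStarAlgAut_apply] at hspec
  set U : Matrix (Fin d) (Fin d) ℂ := (hB.eigenvectorUnitary : Matrix (Fin d) (Fin d) ℂ) with hU
  set lam : Fin d → ℝ := hB.eigenvalues with hlam
  set D : Matrix (Fin d) (Fin d) ℂ := Matrix.diagonal (RCLike.ofReal ∘ lam) with hD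
  have hU1 : U * star U = 1 := by
    have := hB.eigenvectorUnitary.prop
    rw [Unitary.mem_iff] at this
    exact this.2
  have hU2 : star U * U = 1 := by
    have := hB.eigenvectorUnitary.prop
    rw [Unitary.mem_iff] at this
    exact this.1
  have key : ∀ Y : Matrix (Fin d) (Fin d) ℂ, (U * Y * star U).PosSemidef ↔ Y.PosSemidef := by
    intro Y
    have : U * Y * star U = (star U)ᴴ * Y * (star U) := by
      rw [star_eq_conjTranspose U, conjTranspose_conjTranspose]
    rw [this]
    exact psd_conj_iff (star U) U Y hU2 hU1
  have e1 : 1 + B = U * (1 + D) * star U := by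
    rw [Matrix.mul_add, Matrix.add_mul, Matrix.mul_one, hU1, ← hspec]
  have e2 : 1 - B = U * (1 - D) * star U := by
    rw [Matrix.mul_sub, Matrix.sub_mul, Matrix.mul_one, hU1, ← hspec]
  have e3 : 1 - B * B = U * (1 - D * D) * star U := by
    have : B * B = U * (D * D) * star U := by
      rw [hspec]
      calc U * D * star U * (U * D * star U) = U * (D * ((star U * U) * (D * star U))) := by
            simp only [Matrix.mul_assoc]
        _ = U * (D * D) * star U := by rw [hU2, Matrix.one_mul, Matrix.mul_assoc, Matrix.mul_assoc]
    rw [Matrix.mul_sub, Matrix.sub_mul, Matrix.mul_one, hU1, this]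
  rw [e1, e2, e3, key, key, key]
  have d1 : (1 : Matrix (Fin d) (Fin d) ℂ) + D = Matrix.diagonal (fun i => 1 + (lam i : ℂ)) := by
    rw [hD, ← Matrix.diagonal_one, Matrix.diagonal_add]
    congr 1
  have d2 : (1 : Matrix (Fin d) (Fin d) ℂ) - D = Matrix.diagonal (fun i => 1 - (lam i : ℂ)) := by
    rw [hD, ← Matrix.diagonal_one, Matrix.diagonal_sub]
    congr 1
  have d3 : (1 : Matrix (Fin d) (Fin d) ℂ) - D * D
      = Matrix.diagonal (fun i => 1 - (lam i : ℂ) * (lam i : ℂ)) := by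
    rw [hD, Matrix.diagonal_mul_diagonal, ← Matrix.diagonal_one, Matrix.diagonal_sub]
    congr 1
  rw [d1, d2, d3, posSemidef_diagonal_iff, posSemidef_diagonal_iff, posSemidef_diagonal_iff]
  have c1 : ∀ i, (0 ≤ 1 + (lam i : ℂ)) ↔ 0 ≤ 1 + lam i := by
    intro i
    rw [show (1 + (lam i : ℂ)) = ((1 + lam i : ℝ) : ℂ) by push_cast; ring]
    exact Complex.zero_le_real
  have c2 : ∀ i, (0 ≤ 1 - (lam i : ℂ)) ↔ 0 ≤ 1 - lam i := by
    intro i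
    rw [show (1 - (lam i : ℂ)) = ((1 - lam i : ℝ) : ℂ) by push_cast; ring]
    exact Complex.zero_le_real
  have c3 : ∀ i, (0 ≤ 1 - (lam i : ℂ) * (lam i : ℂ)) ↔ 0 ≤ 1 - lam i * lam i := by
    intro i
    rw [show (1 - (lam i : ℂ) * (lam i : ℂ)) = ((1 - lam i * lam i : ℝ) : ℂ) by push_cast; ring]
    exact Complex.zero_le_real
  simp only [c1, c2, c3]
  constructor
  · rintro ⟨ha, hb⟩ i
    nlinarith [ha i, hb i]
  · intro h
    refine ⟨fun i => ?_, fun i => ?_⟩ <;> nlinarith [h i]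

/-- extraction of positive definiteness from the uncertainty relation -/
lemma posdef_of_CM {n : ℕ} {σ : Matrix (Fin (2*n)) (Fin (2*n)) ℝ} (hσsym : σ.IsSymm)
    (hP : (cm σ + Complex.I • cm (Omega n)).PosSemidef) : σ.PosDef := by
  have hσh : σ.IsHermitian := by rw [IsHermitian, real_conjTranspose]; exact hσsym
  refine PosDef.of_dotProduct_mulVec_pos hσh (fun x hx => ?_)
  have hst : star (fun i => (x i : ℂ)) = fun i => (x i : ℂ) := by
    funext i; simp [Pi.star_apply, Complex.conj_ofReal]
  have hΩx : x ⬝ᵥ Omega n *ᵥ x = 0 := by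
    have h1 : x ⬝ᵥ Omega n *ᵥ x = ((Omega n)ᵀ *ᵥ x) ⬝ᵥ x := by
      rw [Matrix.dotProduct_mulVec, Matrix.mulVec_transpose]
    rw [Omega_transpose, Matrix.neg_mulVec, neg_dotProduct,
      dotProduct_comm (Omega n *ᵥ x) x] at h1
    linarith
  have hquad : star (fun i => (x i : ℂ)) ⬝ᵥ ((cm σ + Complex.I • cm (Omega n)) *ᵥ
      (fun i => (x i : ℂ))) = ((x ⬝ᵥ σ *ᵥ x : ℝ) : ℂ) := by
    rw [hst, Matrix.add_mulVec, dotProduct_add, cm_quad, Matrix.smul_mulVec,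
      dotProduct_smul, cm_quad, hΩx]
    simp
  have h0 : 0 ≤ x ⬝ᵥ σ *ᵥ x := by
    have h2 := hP.dotProduct_mulVec_nonneg (fun i => (x i : ℂ))
    rw [hquad] at h2
    exact Complex.zero_le_real.mp h2
  rcases h0.lt_or_eq with hlt | heq
  · simpa using hlt
  · exfalso
    have hz0 : (cm σ + Complex.I • cm (Omega n)) *ᵥ (fun i => (x i : ℂ)) = 0 :=
      (hP.dotProduct_mulVec_zero_iff _).mp (by rw [hquad, ← heq]; simp)
    rw [Matrix.add_mulVec, Matrix.smul_mulVec, cm_mulVec, cm_mulVec] at hz0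
    have hΩ0 : Omega n *ᵥ x = 0 := by
      funext j
      have h3 := congrFun hz0 j
      simp only [Pi.add_apply, Pi.smul_apply, Pi.zero_apply, smul_eq_mul] at h3
      have him := congrArg Complex.im h3
      simpa using him
    have hxx : (Omega n * Omega n) *ᵥ x = 0 := by
      rw [← Matrix.mulVec_mulVec, hΩ0, Matrix.mulVec_zero]
    rw [Omega_mul_self, Matrix.neg_mulVec, Matrix.one_mulVec, neg_eq_zero] at hxx
    exact hx hxx

/-- the main equivalence, given positive definiteness -/
lemma main_equiv {n : ℕ} {σ : Matrix (Fin (2*n)) (Fin (2*n)) ℝ} (hσpd : σ.PosDef) :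
    (cm σ + Complex.I • cm (Omega n)).PosSemidef ↔
      (msqrt σ * (Omega n)ᵀ * σ * Omega n * msqrt σ - 1).PosSemidef := by
  have hpsd := hσpd.posSemidef
  set s := msqrt σ with hs
  have hsdef : s = msqrt σ := hs
  clear_value s
  have hss : s * s = σ := by
    rw [hsdef]; exact msqrt_mul_self hpsd
  have hssym : sᵀ = s := by
    rw [hsdef]; exact msqrt_transpose hpsd
  have hdets : IsUnit s.det := by
    have hσdet : σ.det ≠ 0 := ne_of_gt hσpd.det_pos
    have hd : s.det * s.det = σ.det := by rw [← Matrix.det_mul, hss]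
    exact isUnit_iff_ne_zero.mpr (fun h => hσdet (by rw [← hd, h, zero_mul]))
  set t := s⁻¹ with ht
  have hts : t * s = 1 := Matrix.nonsing_inv_mul s hdets
  have hst : s * t = 1 := Matrix.mul_nonsing_inv s hdets
  have htsym : tᵀ = t := by rw [ht, Matrix.transpose_nonsing_inv, hssym]
  clear_value t
  have hΩΩ := Omega_mul_self n
  have hΩT := Omega_transpose n
  set Om := Omega n with hOm
  clear_value Om
  set W := t * Om * t with hW
  set X := s * Om * s with hX
  clear_value W X
  have hWX : W * X = -1 := by
    calc W * X = t * (Om * ((t * s) * (Om * s))) := by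
          rw [hW, hX]; simp only [Matrix.mul_assoc]
      _ = t * ((Om * Om) * s) := by
          rw [hts, Matrix.one_mul, ← Matrix.mul_assoc Om Om s]
      _ = -(t * s) := by rw [hΩΩ, neg_one_mul, mul_neg]
      _ = -1 := by rw [hts]
  have hXW : X * W = -1 := by
    calc X * W = s * (Om * ((s * t) * (Om * t))) := by
          rw [hW, hX]; simp only [Matrix.mul_assoc]
      _ = s * ((Om * Om) * t) := by
          rw [hst, Matrix.one_mul, ← Matrix.mul_assoc Om Om t]
      _ = -(s * t) := by rw [hΩΩ, neg_one_mul, mul_neg]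
      _ = -1 := by rw [hst]
  have hXt : Xᵀ = -X := by
    rw [hX, Matrix.transpose_mul, Matrix.transpose_mul, hssym, hΩT]
    rw [Matrix.neg_mul, Matrix.mul_neg, Matrix.mul_assoc]
  have hXtW : Xᵀ * W = 1 := by rw [hXt, Matrix.neg_mul, hXW, neg_neg]
  have htσt : t * σ * t = 1 := by
    calc t * σ * t = (t * s) * (s * t) := by rw [← hss]; simp only [Matrix.mul_assoc]
      _ = 1 := by rw [hts, hst, Matrix.one_mul]
  have hWT : Wᵀ = -W := by
    rw [hW, Matrix.transpose_mul, Matrix.transpose_mul, htsym, hΩT]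
    rw [Matrix.neg_mul, Matrix.mul_neg, Matrix.mul_assoc]
  set B := Complex.I • cm W with hB
  have hBh : B.IsHermitian := by
    rw [IsHermitian, hB, Matrix.conjTranspose_smul, cm_conjTranspose, hWT, cm_neg]
    simp [Complex.conj_I]
  have step12 : (cm σ + Complex.I • cm Om).PosSemidef ↔ (1 + B).PosSemidef := by
    have hconj : (cm t)ᴴ * (cm σ + Complex.I • cm Om) * (cm t) = 1 + B := by
      rw [cm_conjTranspose, htsym, Matrix.mul_add, Matrix.add_mul]
      rw [mul_smul_comm, smul_mul_assoc]
      rw [← cm_mul, ← cm_mul, ← cm_mul, ← cm_mul, htσt, cm_one, hB, hW]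
    rw [← hconj]
    exact (psd_conj_iff (cm t) (cm s) _
      (by rw [← cm_mul, hts, cm_one]) (by rw [← cm_mul, hst, cm_one])).symm
  have step3 : (1 + B).PosSemidef ↔ ((1 + B).PosSemidef ∧ (1 - B).PosSemidef) := by
    constructor
    · intro h
      refine ⟨h, ?_⟩
      have h2 := h.transpose
      have e : (1 + B)ᵀ = 1 - B := by
        rw [Matrix.transpose_add, Matrix.transpose_one, hB, Matrix.transpose_smul,
          ← cm_transpose, hWT, cm_neg, smul_neg, sub_eq_add_neg]
      rwa [e] at h2
    · exact And.left
  have step5 : (1 : Matrix (Fin (2*n)) (Fin (2*n)) ℂ) - B * B = cm (1 + W * W) := by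
    have hBB : B * B = -cm (W * W) := by
      rw [hB, mul_smul_comm, smul_mul_assoc, smul_smul, Complex.I_mul_I,
        ← cm_mul, neg_one_smul]
    rw [hBB, sub_neg_eq_add, cm_add, cm_one]
  have step6 : (cm (1 + W * W)).PosSemidef ↔
      ((cm X)ᴴ * cm (1 + W * W) * cm X).PosSemidef := by
    refine (psd_conj_iff (cm X) (cm (-W)) _ ?_ ?_).symm
    · rw [← cm_mul, Matrix.mul_neg, hXW, neg_neg, cm_one]
    · rw [← cm_mul, Matrix.neg_mul, hWX, neg_neg, cm_one]
  have step7 : (cm X)ᴴ * cm (1 + W * W) * cm X = cm (s * Omᵀ * σ * Om * s - 1) := by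
    have e2 : Xᵀ * (1 + W * W) * X = Xᵀ * X + (Xᵀ * W) * (W * X) := by
      rw [Matrix.mul_add, Matrix.mul_one, Matrix.add_mul]
      congr 1
      simp only [Matrix.mul_assoc]
    have e3 : Xᵀ * X = s * Omᵀ * σ * Om * s := by
      rw [hXt, hX, Matrix.neg_mul]
      calc -(s * Om * s * (s * Om * s)) = -(s * (Om * ((s * s) * (Om * s)))) := by
            simp only [Matrix.mul_assoc]
        _ = s * Omᵀ * σ * Om * s := by
            rw [hss, hΩT, Matrix.mul_neg, Matrix.neg_mul, Matrix.neg_mul, Matrix.neg_mul,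
              neg_inj]
            simp only [Matrix.mul_assoc]
    have e4 : Xᵀ * (1 + W * W) * X = s * Omᵀ * σ * Om * s - 1 := by
      rw [e2, e3, hXtW, hWX, Matrix.one_mul, sub_eq_add_neg]
    rw [cm_conjTranspose, ← cm_mul, ← cm_mul, e4]
  rw [step12, step3, herm_one_pm_iff hBh, step5, step6, step7, cm_posSemidef_iff]

end AuxLemmas

/-- The Robertson–Schrödinger uncertainty relation `σ + iΩ ≥ 0` for a real symmetric `σ`
holds if and only if `σ` is positive definite and `σ^{1/2} Ωᵀ σ Ω σ^{1/2} ≥ 𝟙`. -/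
theorem uncertainty_relation_iff (n : ℕ) (σ : Matrix (Fin (2*n)) (Fin (2*n)) ℝ)
    (hσsym : σ.IsSymm) :
    (σ.map (Complex.ofReal ·) + Complex.I • (Omega n).map (Complex.ofReal ·)).PosSemidef ↔
      σ.PosDef ∧ (msqrt σ * (Omega n)ᵀ * σ * Omega n * msqrt σ - 1).PosSemidef := by
  have hiff : (σ.map (Complex.ofReal ·) + Complex.I • (Omega n).map (Complex.ofReal ·)) =
      cm σ + Complex.I • cm (Omega n) := rfl
  rw [hiff]
  constructor
  · intro hP
    have hpd := posdef_of_CM hσsym hP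
    exact ⟨hpd, (main_equiv hpd).mp hP⟩
  · rintro ⟨hpd, hM⟩
    exact (main_equiv hpd).mpr hM
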